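/- arXiv:2004.00490 — 2 statements merged into one kernel-verified Lean document; each statement's English description precedes it below -/
import Mathlib

section
/- Fix weights \rho \in (0,1), positive reals n_1,...,n_K with n = \sum_k n_k, gradient norms G_k = ||g_k|| > 0, and upload latencies T_k > 0. The distribution (p_1,...,p_K) minimizing \sum_{k=1}^K [ (\rho/p_k)(n_k/n)^2 G_k^2 + (1-\rho) p_k T_k ] over probability distributions with p_k > 0 is given by p_k^* = (n_k/n) G_k \sqrt{\rho / ((1-\rho) T_k + \lambda^*)}, where \lambda^* is chosen so that \sum_k p_k^* = 1. -/
open scoped BigOperators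

lemma stmt5_aux (a c q s : ℝ) (hc : 0 < c) (hq : 0 < q) (hs : 0 < s)
    (h : s ^ 2 = a / c) : a / s + c * s ≤ a / q + c * q := by
  have ha' : a = c * s ^ 2 := by rw [h]; field_simp
  subst ha'
  have h1 : c * s ^ 2 / s = c * s := by field_simp
  rw [h1]
  have key : c * s ^ 2 / q + c * q - (c * s + c * s) = c * (s - q) ^ 2 / q := by
    field_simp; ring
  have pos : 0 ≤ c * (s - q) ^ 2 / q := by positivity
  linarith

/-- Importance- and channel-aware optimal scheduling distribution (one device per round). -/
theorem stmt_5 (K : ℕ) (ρ : ℝ) (hρ : ρ ∈ Set.Ioo (0 : ℝ) 1)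
    (nk : Fin K → ℝ) (hnk : ∀ k, 0 < nk k)
    (n : ℝ) (hn : n = ∑ k, nk k)
    (G : Fin K → ℝ) (hG : ∀ k, 0 < G k)
    (T : Fin K → ℝ) (hT : ∀ k, 0 < T k)
    (lam : ℝ) (hlam : ∀ k, 0 < (1 - ρ) * T k + lam)
    (pstar : Fin K → ℝ)
    (hpstar : ∀ k, pstar k = (nk k / n) * G k * Real.sqrt (ρ / ((1 - ρ) * T k + lam)))
    (hsum : ∑ k, pstar k = 1) :
    ∀ p : Fin K → ℝ, (∀ k, 0 < p k) → ∑ k, p k = 1 →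
      ∑ k, ((ρ / pstar k) * (nk k / n) ^ 2 * G k ^ 2 + (1 - ρ) * pstar k * T k) ≤
        ∑ k, ((ρ / p k) * (nk k / n) ^ 2 * G k ^ 2 + (1 - ρ) * p k * T k) := by
  intro p hp hpsum
  have hK : 0 < K := by
    by_contra h
    have hK0 : K = 0 := Nat.le_zero.mp (Nat.not_lt.mp h)
    subst hK0
    simp at hsum
  haveI : Nonempty (Fin K) := ⟨⟨0, hK⟩⟩
  have hn0 : 0 < n := by
    rw [hn]
    exact Finset.sum_pos (fun k _ => hnk k) Finset.univ_nonempty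
  have hspos : ∀ k, 0 < pstar k := by
    intro k
    rw [hpstar k]
    exact mul_pos (mul_pos (div_pos (hnk k) hn0) (hG k))
      (Real.sqrt_pos.mpr (div_pos hρ.1 (hlam k)))
  have hsq : ∀ k, pstar k ^ 2 =
      ρ * (nk k / n) ^ 2 * G k ^ 2 / ((1 - ρ) * T k + lam) := by
    intro k
    rw [hpstar k, mul_pow, mul_pow,
      Real.sq_sqrt (div_nonneg hρ.1.le (hlam k).le)]
    ring
  have expand : ∀ q : Fin K → ℝ,
      ∑ k, ((ρ / q k) * (nk k / n) ^ 2 * G k ^ 2 + (1 - ρ) * q k * T k) =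
      ∑ k, (ρ * (nk k / n) ^ 2 * G k ^ 2 / q k + ((1 - ρ) * T k + lam) * q k)
        - lam * ∑ k, q k := by
    intro q
    rw [Finset.mul_sum, ← Finset.sum_sub_distrib]
    exact Finset.sum_congr rfl fun k _ => by ring
  rw [expand pstar, expand p, hsum, hpsum]
  apply sub_le_sub_right
  apply Finset.sum_le_sum
  intro k _
  exact stmt5_aux _ _ _ _ (hlam k) (hp k) (hspos k) (hsq k)
end

section
/- Let \mu > 0, \chi > 1/(2\mu), \nu > 0, \ell > 0, G > 0, and set \zeta = max{ \ell G^2 \chi^2 / (2(2\mu\chi - 1)), (1+\nu) D_1 } for some D_1 \ge 0. Then for any N \ge 1, (1 - 2\mu\chi/(N+\nu)) \cdot \zeta/(N+\nu) + (\ell/2)(\chi/(N+\nu))^2 G^2 \le \zeta/(N+1+\nu). -/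
/-- Key inductive-step inequality in the O(1/T) convergence proof. -/
theorem stmt_14 (μ χ ν ℓ G D1 : ℝ) (hμ : 0 < μ) (hχ : 1 / (2 * μ) < χ) (hν : 0 < ν)
    (hℓ : 0 < ℓ) (hG : 0 < G) (hD1 : 0 ≤ D1)
    (ζ : ℝ) (hζ : ζ = max (ℓ * G ^ 2 * χ ^ 2 / (2 * (2 * μ * χ - 1))) ((1 + ν) * D1)) :
    ∀ N : ℕ, 1 ≤ N →
      (1 - 2 * μ * χ / (N + ν)) * (ζ / (N + ν)) + ℓ / 2 * (χ / (N + ν)) ^ 2 * G ^ 2 ≤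
        ζ / (N + 1 + ν) := by
  intro N hN
  have hn : (1:ℝ) ≤ (N:ℝ) := by exact_mod_cast hN
  have hn0 : (0:ℝ) < N + ν := by linarith
  have hn1 : (0:ℝ) < N + 1 + ν := by linarith
  have ha : (0:ℝ) < 2 * μ * χ - 1 := by
    have h := (div_lt_iff₀ (by positivity : (0:ℝ) < 2 * μ)).mp hχ
    nlinarith
  have hζ0 : 0 ≤ ζ := by
    rw [hζ]
    exact le_trans (by positivity) (le_max_right _ _)
  have hc : ℓ * G ^ 2 * χ ^ 2 ≤ 2 * (2 * μ * χ - 1) * ζ := by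
    have h : ℓ * G ^ 2 * χ ^ 2 / (2 * (2 * μ * χ - 1)) ≤ ζ := hζ ▸ le_max_left _ _
    have := (div_le_iff₀ (by positivity : (0:ℝ) < 2 * (2 * μ * χ - 1))).mp h
    linarith
  rw [← sub_nonneg]
  have key : ζ / (N + 1 + ν) -
      ((1 - 2 * μ * χ / (N + ν)) * (ζ / (N + ν)) + ℓ / 2 * (χ / (N + ν)) ^ 2 * G ^ 2) =
      ((N + 1 + ν) * (2 * μ * χ - 1) * ζ + ζ - (N + 1 + ν) * (ℓ * G ^ 2 * χ ^ 2 / 2)) /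
        ((N + 1 + ν) * (N + ν) ^ 2) := by
    field_simp
    ring
  rw [key]
  apply div_nonneg _ (by positivity)
  nlinarith [mul_le_mul_of_nonneg_left hc (le_of_lt hn1)]
end
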